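/- In the binary logit model with duration dependence, let μ be a probability measure on ℝ and p* : ℝ → [0,1] a measurable function giving the probability given α of the initial condition (y1 = 0) (so 1 − p*(α) is the probability of (y1 = 1, initial duration 1)). Define the four-period history probabilities P_{y1,y2,y3,y4} by integrating over μ the conditional history probabilities of the duration-dependent model, and define AME_{0→1} = ∫ (Λ(α+β1) − Λ(α)) dμ(α). Then: AME_{0→1} = ((e^{β1}−1)/2)·(P_{0,0,1,0} + P_{0,1,0,0}) + ((e^{β1}−1)/e^{β1})·P_{0,0,1,1} + (e^{β1}−1)·(P_{1,0,1,0} + P_{1,0,1,1}). (Proposition 5, equation (45).) -/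
import Mathlib


open MeasureTheory

/-- The logistic function `Λ(u) = e^u / (1 + e^u)`. -/
noncomputable def logistic (u : ℝ) : ℝ := Real.exp u / (1 + Real.exp u)

lemma logistic_nonneg (u : ℝ) : 0 ≤ logistic u := by
  unfold logistic
  positivity

lemma logistic_le_one (u : ℝ) : logistic u ≤ 1 := by
  unfold logistic
  rw [div_le_one (by positivity)]
  linarith

lemma logistic_measurable : Measurable logistic := by
  unfold logistic
  fun_prop (disch := intro x; positivity)

lemma key_identity (β1 α p : ℝ) :
    logistic (α + β1) - logistic α
      = ((Real.exp β1 - 1) / 2)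
          * (p * (1 - logistic α) * logistic α * (1 - logistic (α + β1))
              + p * logistic α * (1 - logistic (α + β1)) * (1 - logistic α))
        + ((Real.exp β1 - 1) / Real.exp β1)
          * (p * (1 - logistic α) * logistic α * logistic (α + β1))
        + (Real.exp β1 - 1)
          * ((1 - p) * (1 - logistic (α + β1)) * logistic α * (1 - logistic (α + β1))
              + (1 - p) * (1 - logistic (α + β1)) * logistic α * logistic (α + β1)) := by
  unfold logistic
  rw [Real.exp_add]
  have ha := Real.exp_pos α
  have hb := Real.exp_pos β1
  have h1 : (0:ℝ) < 1 + Real.exp α := by linarith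
  have h2 : (0:ℝ) < 1 + Real.exp α * Real.exp β1 := by positivity
  field_simp
  ring

lemma integrable_bdd (μ : Measure ℝ) [IsProbabilityMeasure μ] (f : ℝ → ℝ)
    (hf : Measurable f) (h0 : ∀ x, 0 ≤ f x) (h1 : ∀ x, f x ≤ 1) :
    Integrable f μ := by
  refine (integrable_const (1:ℝ)).mono' hf.aestronglyMeasurable ?_
  filter_upwards with x
  rw [Real.norm_eq_abs, abs_of_nonneg (h0 x)]
  exact h1 x

/-- Proposition 5 (equation (45)): in the binary logit model with duration
dependence (probability of choosing 1 is `Λ(α)` after lagged choice 0 and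
`Λ(α + β(d))` after lagged choice 1 with duration `d`; `β₁ = β(1)`; initial
duration 1 when `y₁ = 1`), the average marginal effect of a change in
duration from 0 to 1, `AME_{0→1} = ∫ (Λ(α+β₁) − Λ(α)) dμ(α)`, satisfies
`AME_{0→1} = ((e^{β₁}−1)/2)(P_{0,0,1,0} + P_{0,1,0,0})
  + ((e^{β₁}−1)/e^{β₁}) P_{0,0,1,1} + (e^{β₁}−1)(P_{1,0,1,0} + P_{1,0,1,1})`,
where `p*(α)` is the probability of the initial condition `y₁ = 0` and the
`P`'s are the four-period history probabilities. -/
theorem prop5_AME_0_to_1 (β1 : ℝ) (μ : Measure ℝ) [IsProbabilityMeasure μ]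
    (pstar : ℝ → ℝ) (hmeas : Measurable pstar)
    (h0 : ∀ α, 0 ≤ pstar α) (h1 : ∀ α, pstar α ≤ 1) :
    (∫ α, (logistic (α + β1) - logistic α) ∂μ)
      = ((Real.exp β1 - 1) / 2)
          * ((∫ α, pstar α * (1 - logistic α) * logistic α * (1 - logistic (α + β1)) ∂μ)
              + ∫ α, pstar α * logistic α * (1 - logistic (α + β1)) * (1 - logistic α) ∂μ)
        + ((Real.exp β1 - 1) / Real.exp β1)
          * (∫ α, pstar α * (1 - logistic α) * logistic α * logistic (α + β1) ∂μ)
        + (Real.exp β1 - 1)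
          * ((∫ α, (1 - pstar α) * (1 - logistic (α + β1)) * logistic α * (1 - logistic (α + β1)) ∂μ)
              + ∫ α, (1 - pstar α) * (1 - logistic (α + β1)) * logistic α * logistic (α + β1) ∂μ) := by
  have hL := logistic_measurable
  have hLs : Measurable fun α : ℝ => logistic (α + β1) :=
    hL.comp (measurable_id.add_const β1)
  have bnd : ∀ a b c d : ℝ, 0 ≤ a → a ≤ 1 → 0 ≤ b → b ≤ 1 → 0 ≤ c → c ≤ 1 →
      0 ≤ d → d ≤ 1 → 0 ≤ a * b * c * d ∧ a * b * c * d ≤ 1 := by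
    intro a b c d ha ha1 hb hb1 hc hc1 hd hd1
    constructor
    · positivity
    · calc a * b * c * d ≤ 1 * 1 * 1 * 1 := by
            gcongr
      _ = 1 := by norm_num
  have hI1 : Integrable (fun α => pstar α * (1 - logistic α) * logistic α * (1 - logistic (α + β1))) μ := by
    refine integrable_bdd μ _ (by fun_prop) (fun x => ?_) (fun x => ?_)
    · exact (bnd _ _ _ _ (h0 x) (h1 x) (by linarith [logistic_le_one x]) (by linarith [logistic_nonneg x]) (logistic_nonneg x) (logistic_le_one x) (by linarith [logistic_le_one (x+β1)]) (by linarith [logistic_nonneg (x+β1)])).1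
    · exact (bnd _ _ _ _ (h0 x) (h1 x) (by linarith [logistic_le_one x]) (by linarith [logistic_nonneg x]) (logistic_nonneg x) (logistic_le_one x) (by linarith [logistic_le_one (x+β1)]) (by linarith [logistic_nonneg (x+β1)])).2
  have hI2 : Integrable (fun α => pstar α * logistic α * (1 - logistic (α + β1)) * (1 - logistic α)) μ := by
    refine integrable_bdd μ _ (by fun_prop) (fun x => ?_) (fun x => ?_)
    · exact (bnd _ _ _ _ (h0 x) (h1 x) (logistic_nonneg x) (logistic_le_one x) (by linarith [logistic_le_one (x+β1)]) (by linarith [logistic_nonneg (x+β1)]) (by linarith [logistic_le_one x]) (by linarith [logistic_nonneg x])).1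
    · exact (bnd _ _ _ _ (h0 x) (h1 x) (logistic_nonneg x) (logistic_le_one x) (by linarith [logistic_le_one (x+β1)]) (by linarith [logistic_nonneg (x+β1)]) (by linarith [logistic_le_one x]) (by linarith [logistic_nonneg x])).2
  have hI3 : Integrable (fun α => pstar α * (1 - logistic α) * logistic α * logistic (α + β1)) μ := by
    refine integrable_bdd μ _ (by fun_prop) (fun x => ?_) (fun x => ?_)
    · exact (bnd _ _ _ _ (h0 x) (h1 x) (by linarith [logistic_le_one x]) (by linarith [logistic_nonneg x]) (logistic_nonneg x) (logistic_le_one x) (logistic_nonneg (x+β1)) (logistic_le_one (x+β1))).1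
    · exact (bnd _ _ _ _ (h0 x) (h1 x) (by linarith [logistic_le_one x]) (by linarith [logistic_nonneg x]) (logistic_nonneg x) (logistic_le_one x) (logistic_nonneg (x+β1)) (logistic_le_one (x+β1))).2
  have hI4 : Integrable (fun α => (1 - pstar α) * (1 - logistic (α + β1)) * logistic α * (1 - logistic (α + β1))) μ := by
    refine integrable_bdd μ _ (by fun_prop) (fun x => ?_) (fun x => ?_)
    · exact (bnd _ _ _ _ (by linarith [h1 x]) (by linarith [h0 x]) (by linarith [logistic_le_one (x+β1)]) (by linarith [logistic_nonneg (x+β1)]) (logistic_nonneg x) (logistic_le_one x) (by linarith [logistic_le_one (x+β1)]) (by linarith [logistic_nonneg (x+β1)])).1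
    · exact (bnd _ _ _ _ (by linarith [h1 x]) (by linarith [h0 x]) (by linarith [logistic_le_one (x+β1)]) (by linarith [logistic_nonneg (x+β1)]) (logistic_nonneg x) (logistic_le_one x) (by linarith [logistic_le_one (x+β1)]) (by linarith [logistic_nonneg (x+β1)])).2
  have hI5 : Integrable (fun α => (1 - pstar α) * (1 - logistic (α + β1)) * logistic α * logistic (α + β1)) μ := by
    refine integrable_bdd μ _ (by fun_prop) (fun x => ?_) (fun x => ?_)
    · exact (bnd _ _ _ _ (by linarith [h1 x]) (by linarith [h0 x]) (by linarith [logistic_le_one (x+β1)]) (by linarith [logistic_nonneg (x+β1)]) (logistic_nonneg x) (logistic_le_one x) (logistic_nonneg (x+β1)) (logistic_le_one (x+β1))).1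
    · exact (bnd _ _ _ _ (by linarith [h1 x]) (by linarith [h0 x]) (by linarith [logistic_le_one (x+β1)]) (by linarith [logistic_nonneg (x+β1)]) (logistic_nonneg x) (logistic_le_one x) (logistic_nonneg (x+β1)) (logistic_le_one (x+β1))).2
  have hA : Integrable (fun a : ℝ => (Real.exp β1 - 1) / 2 *
      (pstar a * (1 - logistic a) * logistic a * (1 - logistic (a + β1)) +
        pstar a * logistic a * (1 - logistic (a + β1)) * (1 - logistic a))) μ :=
    (hI1.add hI2).const_mul _
  have hB : Integrable (fun a : ℝ => (Real.exp β1 - 1) / Real.exp β1 *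
      (pstar a * (1 - logistic a) * logistic a * logistic (a + β1))) μ :=
    hI3.const_mul _
  have hC : Integrable (fun a : ℝ => (Real.exp β1 - 1) *
      ((1 - pstar a) * (1 - logistic (a + β1)) * logistic a * (1 - logistic (a + β1)) +
        (1 - pstar a) * (1 - logistic (a + β1)) * logistic a * logistic (a + β1))) μ :=
    (hI4.add hI5).const_mul _
  have hAB : Integrable (fun a : ℝ => (Real.exp β1 - 1) / 2 *
      (pstar a * (1 - logistic a) * logistic a * (1 - logistic (a + β1)) +
        pstar a * logistic a * (1 - logistic (a + β1)) * (1 - logistic a)) +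
      (Real.exp β1 - 1) / Real.exp β1 *
      (pstar a * (1 - logistic a) * logistic a * logistic (a + β1))) μ := hA.add hB
  rw [← integral_add hI1 hI2, ← integral_add hI4 hI5,
    ← integral_const_mul, ← integral_const_mul, ← integral_const_mul,
    ← integral_add hA hB, ← integral_add hAB hC]
  exact integral_congr_ae (ae_of_all _ fun α => key_identity β1 α (pstar α))
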